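/- Let d ≥ 1, γ > 0 and 0 < α < β be real numbers. Let b, c ∈ ℝ with b > 0 be such that for every ℓ ∈ [α, β], (c + γb − ℓ)² < 4b(γc − bℓ). Then there exists ε > 0 such that for every symmetric matrix H ∈ ℝ^{d×d} with α·Id ≤ H ≤ β·Id and all x, v ∈ ℝ^d: b|x|² + (c + γb)⟨x, v⟩ − ⟨x, H v⟩ − b⟨v, H v⟩ + γc|v|² ≥ ε(|x|² + |v|²). -/

import Mathlib

open Matrix

private lemma scalar_key (α β γ b c ε X Y Z t s r : ℝ)
    (hαβ : α < β) (hεb : ε < b)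
    (hPα : 0 ≤ 4*(b-ε)*(γ*c - b*α - ε) - (c + γ*b - α)^2)
    (hPβ : 0 ≤ 4*(b-ε)*(γ*c - b*β - ε) - (c + γ*b - β)^2)
    (h1 : 0 ≤ s - α*t) (h2 : 0 ≤ β*t - s)
    (h3 : r ≤ (α+β)*s - α*β*t)
    (hS : 0 ≤ 4*(b-ε)^2*X + (c+γ*b)^2*t + r + 4*(b-ε)*(c+γ*b)*Y
            - 4*(b-ε)*Z - 2*(c+γ*b)*s) :
    ε*(X + t) ≤ b*X + (c+γ*b)*Y - Z - b*s + γ*c*t := by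
  have hbε : (0:ℝ) < b - ε := by linarith
  have hβα : (0:ℝ) < β - α := by linarith
  have hG : 0 ≤ 4*(b-ε)*(b*X + (c+γ*b)*Y - Z - b*s + γ*c*t - ε*(X+t)) := by
    nlinarith [mul_nonneg h2 hPα, mul_nonneg h1 hPβ, mul_nonneg hβα.le hS,
      mul_nonneg hβα.le (sub_nonneg.mpr h3)]
  nlinarith [mul_pos hbε hbε, hG]

set_option maxHeartbeats 1000000 in
/-- quadratic-form coercivity: if the scalar coefficient inequalities hold
on `[α, β]`, then the associated quadratic form in `(x, v)` is uniformly coercive over all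
symmetric matrices `H` with `α·Id ≤ H ≤ β·Id`. -/
theorem quadratic_form_coercivity
    (d : ℕ) (hd : 1 ≤ d) (γ α β : ℝ)
    (hγ : 0 < γ) (hα : 0 < α) (hαβ : α < β)
    (b c : ℝ) (hb : 0 < b)
    (hscalar : ∀ ℓ ∈ Set.Icc α β, (c + γ * b - ℓ) ^ 2 < 4 * b * (γ * c - b * ℓ)) :
    ∃ ε : ℝ, 0 < ε ∧
      ∀ H : Matrix (Fin d) (Fin d) ℝ, H.IsSymm →
        (H - α • (1 : Matrix (Fin d) (Fin d) ℝ)).PosSemidef →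
        (β • (1 : Matrix (Fin d) (Fin d) ℝ) - H).PosSemidef →
        ∀ x v : Fin d → ℝ,
          ε * (x ⬝ᵥ x + v ⬝ᵥ v) ≤
            b * (x ⬝ᵥ x) + (c + γ * b) * (x ⬝ᵥ v) - x ⬝ᵥ (H *ᵥ v)
              - b * (v ⬝ᵥ (H *ᵥ v)) + γ * c * (v ⬝ᵥ v) := by
  -- choose ε
  obtain ⟨ε, hε0, hεb, hPα, hPβ⟩ :
      ∃ ε : ℝ, 0 < ε ∧ ε < b ∧
        0 ≤ 4*(b-ε)*(γ*c - b*α - ε) - (c + γ*b - α)^2 ∧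
        0 ≤ 4*(b-ε)*(γ*c - b*β - ε) - (c + γ*b - β)^2 := by
    have hsa := hscalar α ⟨le_refl α, hαβ.le⟩
    have hsb := hscalar β ⟨hαβ.le, le_refl β⟩
    have hmα : 0 < γ*c - b*α := by nlinarith [sq_nonneg (c + γ*b - α)]
    have hmβ : 0 < γ*c - b*β := by nlinarith [sq_nonneg (c + γ*b - β)]
    set Pα0 := 4*b*(γ*c - b*α) - (c + γ*b - α)^2 with hPα0def
    set Pβ0 := 4*b*(γ*c - b*β) - (c + γ*b - β)^2 with hPβ0def
    have hPα0 : 0 < Pα0 := by rw [hPα0def]; nlinarith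
    have hPβ0 : 0 < Pβ0 := by rw [hPβ0def]; nlinarith
    have hdα : 0 < 4*(b + (γ*c - b*α)) := by linarith
    have hdβ : 0 < 4*(b + (γ*c - b*β)) := by linarith
    set ε := min (b/2) (min (Pα0 / (4*(b + (γ*c - b*α)))) (Pβ0 / (4*(b + (γ*c - b*β))))) with hεdef
    have hεpos : 0 < ε := lt_min (by linarith) (lt_min (div_pos hPα0 hdα) (div_pos hPβ0 hdβ))
    have hεhalf : ε ≤ b/2 := min_le_left _ _
    have hεα : ε * (4*(b + (γ*c - b*α))) ≤ Pα0 := by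
      rw [← le_div_iff₀ hdα]; exact le_trans (min_le_right _ _) (min_le_left _ _)
    have hεβ : ε * (4*(b + (γ*c - b*β))) ≤ Pβ0 := by
      rw [← le_div_iff₀ hdβ]; exact le_trans (min_le_right _ _) (min_le_right _ _)
    exact ⟨ε, hεpos, by linarith, by nlinarith [sq_nonneg ε], by nlinarith [sq_nonneg ε]⟩
  refine ⟨ε, hε0, fun H hH hA hB x v => ?_⟩
  have hsym : ∀ x y : Fin d → ℝ, x ⬝ᵥ (H *ᵥ y) = (H *ᵥ x) ⬝ᵥ y := by
    intro x y
    rw [dotProduct_mulVec, ← Matrix.mulVec_transpose, hH.eq]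
  set w := H *ᵥ v with hw
  clear_value w
  have hβα : (0:ℝ) < β - α := by linarith
  -- scalar facts from PSD hypotheses
  have key1 := hA.dotProduct_mulVec_nonneg v
  have key2 := hB.dotProduct_mulVec_nonneg v
  simp only [star_trivial, sub_mulVec, smul_mulVec, one_mulVec,
    dotProduct_sub, sub_dotProduct, dotProduct_smul, smul_dotProduct, smul_eq_mul]
    at key1 key2
  rw [← hw] at key1 key2
  have h1 : 0 ≤ v ⬝ᵥ w - α * (v ⬝ᵥ v) := by linarith
  have h2 : 0 ≤ β * (v ⬝ᵥ v) - v ⬝ᵥ w := by linarith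
  have h3 : w ⬝ᵥ w ≤ (α+β) * (v ⬝ᵥ w) - α*β*(v ⬝ᵥ v) := by
    have key3 := hB.dotProduct_mulVec_nonneg (w - α • v)
    have key4 := hA.dotProduct_mulVec_nonneg ((β-α) • v - (w - α • v))
    simp only [star_trivial, sub_mulVec, smul_mulVec, one_mulVec, mulVec_sub, mulVec_smul,
      dotProduct_sub, sub_dotProduct, dotProduct_smul, smul_dotProduct, smul_eq_mul]
      at key3 key4
    have e1 : v ⬝ᵥ (H *ᵥ w) = w ⬝ᵥ w := by rw [hsym, ← hw]
    have e2 : w ⬝ᵥ v = v ⬝ᵥ w := dotProduct_comm _ _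
    have e3 : w ⬝ᵥ (H *ᵥ v) = w ⬝ᵥ w := by rw [← hw]
    have e4 : v ⬝ᵥ (H *ᵥ v) = v ⬝ᵥ w := by rw [← hw]
    simp only [e1, e2, e3, e4] at key3 key4
    nlinarith [key3, key4, mul_pos hβα hβα]
  -- completing the square
  have hS0 : 0 ≤ ((2*(b-ε)) • x + ((c+γ*b) • v - w)) ⬝ᵥ ((2*(b-ε)) • x + ((c+γ*b) • v - w)) :=
    Finset.sum_nonneg fun i _ => mul_self_nonneg _
  have ex1 : v ⬝ᵥ x = x ⬝ᵥ v := dotProduct_comm _ _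
  have ex2 : w ⬝ᵥ x = x ⬝ᵥ w := dotProduct_comm _ _
  have ex3 : w ⬝ᵥ v = v ⬝ᵥ w := dotProduct_comm _ _
  simp only [dotProduct_add, add_dotProduct, dotProduct_sub, sub_dotProduct,
    dotProduct_smul, smul_dotProduct, smul_eq_mul, ex1, ex2, ex3] at hS0
  have hS : 0 ≤ 4*(b-ε)^2*(x ⬝ᵥ x) + (c+γ*b)^2*(v ⬝ᵥ v) + w ⬝ᵥ w
      + 4*(b-ε)*(c+γ*b)*(x ⬝ᵥ v) - 4*(b-ε)*(x ⬝ᵥ w) - 2*(c+γ*b)*(v ⬝ᵥ w) := by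
    ring_nf at hS0 ⊢
    linarith [hS0]
  exact scalar_key α β γ b c ε (x ⬝ᵥ x) (x ⬝ᵥ v) (x ⬝ᵥ w) (v ⬝ᵥ v) (v ⬝ᵥ w) (w ⬝ᵥ w)
    hαβ hεb hPα hPβ h1 h2 h3 hS
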